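/- arXiv:2007.14011 — 4 statements merged into one kernel-verified Lean document; each statement's English description precedes it below -/
import Mathlib

section
/- The REPC (Robust Equilibrium-Preserving Consistency) relation is transitive: if the pair (F^a, F^b) is REPC and the pair (F^b, F^c) is REPC, then the pair (F^a, F^c) is REPC. -/
open scoped BigOperators NNReal

noncomputable section

/-- Class `K∞` function: continuous, strictly increasing and unbounded on `[0,∞)`, vanishing at 0. -/
def IsKInf (φ : ℝ → ℝ) : Prop :=
  ContinuousOn φ (Set.Ici 0) ∧ StrictMonoOn φ (Set.Ici 0) ∧ φ 0 = 0 ∧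
    ∀ c : ℝ, ∃ x : ℝ, 0 ≤ x ∧ c < φ x

/-- Discrete-time trajectory of the closed-loop model `x_{k+1} = F (x_k) (e_k) (T_k)`. -/
def traj {E D : Type*} (F : E → D → ℝ → E) (ξ : E) (es : ℕ → D) (Ts : ℕ → ℝ) : ℕ → E
  | 0 => ξ
  | k + 1 => F (traj F ξ es Ts k) (es k) (Ts k)

/-- `sup_{0 ≤ i ≤ k-1} ‖e_i‖` with the convention that it is `0` for `k = 0`. -/
def supN {D : Type*} [NormedAddCommGroup D] (es : ℕ → D) (k : ℕ) : ℝ :=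
  (((Finset.range k).sup fun i => ‖es i‖₊ : ℝ≥0) : ℝ)

/-- Robust Equilibrium-Preserving Consistency (REPC) of the model `Fa` with the model `Fb`. -/
def REPC {E D : Type*} [NormedAddCommGroup E] [NormedAddCommGroup D]
    (Fa Fb : E → D → ℝ → E) : Prop :=
  ∃ φ : ℝ → ℝ, IsKInf φ ∧
    ∀ M Eb : ℝ, 0 ≤ M → 0 ≤ Eb →
      ∃ K : ℝ, 0 < K ∧ ∃ Tstar : ℝ, 0 < Tstar ∧ ∃ ρ : ℝ → ℝ, IsKInf ρ ∧
        ∀ (xa xb : E) (e : D) (T : ℝ), ‖xa‖ ≤ M → ‖xb‖ ≤ M → ‖e‖ ≤ Eb →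
          0 < T → T < Tstar →
          ‖Fa xa e T - Fb xb e T‖ ≤
            (1 + K * T) * ‖xa - xb‖ + T * ρ T * (max ‖xa‖ ‖xb‖ + φ ‖e‖)

/-- The `k`-fold iterate `α^k(0,{T_i})`. -/
def alphaIter (α : ENNReal → ℝ → ENNReal) (Ts : ℕ → ℝ) : ℕ → ENNReal
  | 0 => 0
  | k + 1 => α (alphaIter α Ts k) (Ts k)

/-- Robust Equilibrium-Preserving Multistep Consistency (REPMC) of `Fa` with `Fb`,
with a fixed class-`K∞` function `φ`. -/
def REPMCWith {E D : Type*} [NormedAddCommGroup E] [NormedAddCommGroup D]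
    (Fa Fb : E → D → ℝ → E) (φ : ℝ → ℝ) : Prop :=
  ∀ M Eb 𝒯 η : ℝ, 0 ≤ M → 0 ≤ Eb → 0 < 𝒯 → 0 < η →
    ∃ Tstar : ℝ, 0 < Tstar ∧ ∃ α : ENNReal → ℝ → ENNReal,
      (∀ T : ℝ, 0 ≤ T → T < Tstar → Monotone (fun δ => α δ T)) ∧
      (∀ (xa xb : E) (e : D) (T δ : ℝ), ‖xa‖ ≤ M → ‖xb‖ ≤ M → ‖e‖ ≤ Eb →
        0 < T → T < Tstar → ‖xa - xb‖ ≤ δ →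
        ENNReal.ofReal ‖Fa xa e T - Fb xb e T‖ ≤ α (ENNReal.ofReal δ) T) ∧
      (∀ Ts : ℕ → ℝ, (∀ i, 0 < Ts i ∧ Ts i < Tstar) →
        ∀ k : ℕ, (∑ i ∈ Finset.range k, Ts i) ≤ 𝒯 →
          alphaIter α Ts k ≤ ENNReal.ofReal (η * M + φ Eb))

/-- REPMC: existence of a suitable `φ ∈ K∞`. -/
def REPMC {E D : Type*} [NormedAddCommGroup E] [NormedAddCommGroup D]
    (Fa Fb : E → D → ℝ → E) : Prop :=
  ∃ φ : ℝ → ℝ, IsKInf φ ∧ REPMCWith Fa Fb φ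

/-- Semiglobal exponential ISS under varying sampling rate, with constants `K ≥ 1`, `λ > 0`
and gain `γ ∈ K∞`. -/
def SEISSVSR {E D : Type*} [NormedAddCommGroup E] [NormedAddCommGroup D]
    (F : E → D → ℝ → E) (K lam : ℝ) (γ : ℝ → ℝ) : Prop :=
  ∀ M Eb : ℝ, 0 ≤ M → 0 ≤ Eb → ∃ Tstar : ℝ, 0 < Tstar ∧
    ∀ (ξ : E) (es : ℕ → D) (Ts : ℕ → ℝ),
      ‖ξ‖ ≤ M → (∀ i, ‖es i‖ ≤ Eb) → (∀ i, 0 < Ts i ∧ Ts i < Tstar) →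
      ∀ k : ℕ, ‖traj F ξ es Ts k‖ ≤
        K * ‖ξ‖ * Real.exp (-lam * ∑ i ∈ Finset.range k, Ts i) + γ (supN es k)

/-- Class `KL` function. -/
def IsKL (β : ℝ → ℝ → ℝ) : Prop :=
  (∀ t : ℝ, 0 ≤ t → ContinuousOn (fun s => β s t) (Set.Ici 0) ∧
    StrictMonoOn (fun s => β s t) (Set.Ici 0) ∧ β 0 t = 0) ∧
  (∀ s : ℝ, 0 ≤ s → StrictAntiOn (fun t => β s t) (Set.Ici 0) ∧
    Filter.Tendsto (fun t => β s t) Filter.atTop (nhds 0))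

lemma IsKInf.nonneg' {φ : ℝ → ℝ} (hφ : IsKInf φ) {x : ℝ} (hx : 0 ≤ x) : 0 ≤ φ x := by
  rcases hx.eq_or_lt with h | h
  · rw [← h, hφ.2.2.1]
  · have := hφ.2.1 (Set.self_mem_Ici) (le_of_lt h : (0:ℝ) ≤ x) h
    rw [hφ.2.2.1] at this
    exact this.le

lemma IsKInf.add' {φ ψ : ℝ → ℝ} (hφ : IsKInf φ) (hψ : IsKInf ψ) :
    IsKInf (fun x => φ x + ψ x) := by
  refine ⟨hφ.1.add hψ.1, fun a ha b hb hab => ?_, by simp [hφ.2.2.1, hψ.2.2.1], fun c => ?_⟩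
  · exact add_lt_add (hφ.2.1 ha hb hab) (hψ.2.1 ha hb hab)
  · obtain ⟨x, hx, hcx⟩ := hφ.2.2.2 c
    exact ⟨x, hx, lt_of_lt_of_le hcx (le_add_of_nonneg_right (hψ.nonneg' hx))⟩

theorem stmt0 {n q : ℕ}
    (Fa Fb Fc : EuclideanSpace ℝ (Fin n) → EuclideanSpace ℝ (Fin q) → ℝ →
      EuclideanSpace ℝ (Fin n))
    (hab : REPC Fa Fb) (hbc : REPC Fb Fc) : REPC Fa Fc := by
  obtain ⟨φ1, hφ1, h1⟩ := hab
  obtain ⟨φ2, hφ2, h2⟩ := hbc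
  refine ⟨fun x => φ1 x + φ2 x, hφ1.add' hφ2, fun M Eb hM hEb => ?_⟩
  obtain ⟨K1, hK1, T1, hT1, ρ1, hρ1, H1⟩ := h1 M Eb hM hEb
  obtain ⟨K2, hK2, T2, hT2, ρ2, hρ2, H2⟩ := h2 M Eb hM hEb
  refine ⟨K1 + K2, by positivity, min T1 T2, lt_min hT1 hT2,
    fun t => ρ1 t + ρ2 t, hρ1.add' hρ2, ?_⟩
  intro xa xc e T hxa hxc he hT hTlt
  have hTlt1 : T < T1 := lt_of_lt_of_le hTlt (min_le_left _ _)
  have hTlt2 : T < T2 := lt_of_lt_of_le hTlt (min_le_right _ _)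
  have hA := H1 xa xa e T hxa hxa he hT hTlt1
  have hB := H2 xa xc e T hxa hxc he hT hTlt2
  simp only [sub_self, norm_zero, mul_zero, zero_add, max_self] at hA
  have htri : ‖Fa xa e T - Fc xc e T‖ ≤
      ‖Fa xa e T - Fb xa e T‖ + ‖Fb xa e T - Fc xc e T‖ := by
    calc ‖Fa xa e T - Fc xc e T‖
        = ‖(Fa xa e T - Fb xa e T) + (Fb xa e T - Fc xc e T)‖ := by abel_nf
      _ ≤ _ := norm_add_le _ _
  have hρ1T : 0 ≤ ρ1 T := hρ1.nonneg' hT.le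
  have hρ2T : 0 ≤ ρ2 T := hρ2.nonneg' hT.le
  have hφ1e : 0 ≤ φ1 ‖e‖ := hφ1.nonneg' (norm_nonneg _)
  have hφ2e : 0 ≤ φ2 ‖e‖ := hφ2.nonneg' (norm_nonneg _)
  have hmax : ‖xa‖ ≤ max ‖xa‖ ‖xc‖ := le_max_left _ _
  have hd : 0 ≤ ‖xa - xc‖ := norm_nonneg _
  simp only
  nlinarith [mul_nonneg hT.le hρ1T, mul_nonneg hT.le hρ2T,
    mul_nonneg (mul_nonneg hT.le hρ1T) (sub_nonneg.mpr hmax),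
    mul_nonneg (mul_nonneg hT.le hρ1T) hφ2e,
    mul_nonneg (mul_nonneg hK1.le hT.le) hd]
end
end

section
/- If the pair (F^a, F^b) is REPC, then the pair (F^a, F^b) is REPMC (Robustly Equilibrium-Preserving Multistep Consistent). In particular, one can take T* := min{T^i, ρ^{-1}(η/(e^{KT}·T)), ρ^{-1}(1/(e^{KT}·T))} and α(δ,T) := (1+KT)δ + Tρ(T)(M + φ(E)), where K, T^i, ρ, φ come from the REPC property, and then the k-fold iterate α^k(0,{T_i}) is bounded by ηM + φ(E) whenever ∑_{i=0}^{k−1} T_i ≤ T and each T_i ∈ (0,T*). -/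
open scoped BigOperators NNReal

noncomputable section

theorem stmt1 {n q : ℕ}
    (Fa Fb : EuclideanSpace ℝ (Fin n) → EuclideanSpace ℝ (Fin q) → ℝ →
      EuclideanSpace ℝ (Fin n))
    (hab : REPC Fa Fb) : REPMC Fa Fb := by
  obtain ⟨φ, hφ, h⟩ := hab
  refine ⟨φ, hφ, ?_⟩
  intro M Eb 𝒯 η hM hEb h𝒯 hη
  obtain ⟨K, hK, T0, hT0, ρ, hρ, hbound⟩ := h M Eb hM hEb
  -- φ Eb ≥ 0
  have hφmono : MonotoneOn φ (Set.Ici 0) := (hφ.2.1).monotoneOn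
  have hφEb : 0 ≤ φ Eb := by
    have := hφmono (Set.mem_Ici.2 le_rfl) (Set.mem_Ici.2 hEb) hEb
    simpa [hφ.2.2.1] using this
  have hMφ : 0 ≤ M + φ Eb := by linarith
  set c : ℝ := min η 1 / (Real.exp (K * 𝒯) * 𝒯) with hc_def
  have hexp_pos : 0 < Real.exp (K * 𝒯) := Real.exp_pos _
  have hc : 0 < c := by
    apply div_pos (lt_min hη one_pos) (mul_pos hexp_pos h𝒯)
  -- choose ε with ρ x < c for x ∈ [0, ε)
  have hρ0 : ρ 0 = 0 := hρ.2.2.1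
  have hcont : ContinuousWithinAt ρ (Set.Ici 0) 0 := hρ.1 0 (Set.mem_Ici.2 le_rfl)
  have htend : Filter.Tendsto ρ (nhdsWithin 0 (Set.Ici 0)) (nhds 0) := by
    have := hcont
    rw [ContinuousWithinAt, hρ0] at this
    exact this
  have hmem : {x : ℝ | ρ x < c} ∈ nhdsWithin 0 (Set.Ici 0) :=
    htend (Iio_mem_nhds hc)
  obtain ⟨ε, hε, hball⟩ := Metric.mem_nhdsWithin_iff.1 hmem
  refine ⟨min T0 ε, lt_min hT0 hε, ?_⟩
  set Tst := min T0 ε with hTst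
  -- ρ T < c for T ∈ (0, Tst)
  have hρ_small : ∀ T : ℝ, 0 < T → T < Tst → ρ T < c := by
    intro T hT1 hT2
    have : T ∈ Metric.ball (0:ℝ) ε ∩ Set.Ici 0 := by
      constructor
      · simp [Real.dist_eq, abs_of_pos hT1]
        exact lt_of_lt_of_le hT2 (min_le_right _ _)
      · exact Set.mem_Ici.2 hT1.le
    exact hball this
  refine ⟨fun δ T => ENNReal.ofReal (1 + K * T) * δ +
      ENNReal.ofReal (T * ρ T * (M + φ Eb)), ?_, ?_, ?_⟩
  · intro T _ _ δ1 δ2 hδ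
    exact add_le_add_left (mul_le_mul_right hδ _) _
  · intro xa xb e T δ hxa hxb he hT hTlt hδ
    have hδ0 : 0 ≤ δ := le_trans (norm_nonneg _) hδ
    have hTρ : 0 ≤ T * ρ T := by
      have : 0 ≤ ρ T := by
        have := (hρ.2.1).monotoneOn (Set.mem_Ici.2 le_rfl) (Set.mem_Ici.2 hT.le) hT.le
        simpa [hρ0] using this
      positivity
    have h1 : ‖Fa xa e T - Fb xb e T‖ ≤
        (1 + K * T) * δ + T * ρ T * (M + φ Eb) := by
      have hb := hbound xa xb e T hxa hxb he hT (lt_of_lt_of_le hTlt (min_le_left _ _))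
      have h2 : max ‖xa‖ ‖xb‖ + φ ‖e‖ ≤ M + φ Eb := by
        have : φ ‖e‖ ≤ φ Eb :=
          hφmono (Set.mem_Ici.2 (norm_nonneg _)) (Set.mem_Ici.2 hEb) he
        have := max_le hxa hxb
        linarith
      have h3 : (1 + K * T) * ‖xa - xb‖ ≤ (1 + K * T) * δ := by
        apply mul_le_mul_of_nonneg_left hδ
        nlinarith
      nlinarith [mul_le_mul_of_nonneg_left h2 hTρ]
    calc ENNReal.ofReal ‖Fa xa e T - Fb xb e T‖
        ≤ ENNReal.ofReal ((1 + K * T) * δ + T * ρ T * (M + φ Eb)) :=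
          ENNReal.ofReal_le_ofReal h1
      _ ≤ ENNReal.ofReal ((1 + K * T) * δ) + ENNReal.ofReal (T * ρ T * (M + φ Eb)) :=
          ENNReal.ofReal_add_le
      _ = ENNReal.ofReal (1 + K * T) * ENNReal.ofReal δ +
            ENNReal.ofReal (T * ρ T * (M + φ Eb)) := by
          rw [ENNReal.ofReal_mul (by nlinarith)]
  · intro Ts hTs k hsum
    have hTρ : ∀ i : ℕ, Ts i * ρ (Ts i) * (M + φ Eb) ≤ Ts i * c * (M + φ Eb) := by
      intro i
      exact mul_le_mul_of_nonneg_right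
        (mul_le_mul_of_nonneg_left (hρ_small (Ts i) (hTs i).1 (hTs i).2).le (hTs i).1.le) hMφ
    have hSnn : ∀ m : ℕ, 0 ≤ ∑ i ∈ Finset.range m, Ts i := fun m =>
      Finset.sum_nonneg fun i _ => (hTs i).1.le
    have key : ∀ m : ℕ, alphaIter (fun δ T => ENNReal.ofReal (1 + K * T) * δ +
        ENNReal.ofReal (T * ρ T * (M + φ Eb))) Ts m ≤
        ENNReal.ofReal (Real.exp (K * ∑ i ∈ Finset.range m, Ts i) * (c * (M + φ Eb)) *
          ∑ i ∈ Finset.range m, Ts i) := by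
      intro m
      induction m with
      | zero => simp [alphaIter]
      | succ m ih =>
        have ht : 0 < Ts m := (hTs m).1
        set s : ℝ := ∑ i ∈ Finset.range m, Ts i with hs
        have hsnn : 0 ≤ s := hSnn m
        have hs1 : ∑ i ∈ Finset.range (m+1), Ts i = s + Ts m := Finset.sum_range_succ _ _
        have haux : (0:ℝ) ≤ 1 + K * Ts m := by nlinarith
        have hc' : 0 ≤ c * (M + φ Eb) := mul_nonneg hc.le hMφ
        calc alphaIter (fun δ T => ENNReal.ofReal (1 + K * T) * δ +
              ENNReal.ofReal (T * ρ T * (M + φ Eb))) Ts (m+1)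
            = ENNReal.ofReal (1 + K * Ts m) * alphaIter (fun δ T =>
                ENNReal.ofReal (1 + K * T) * δ +
                ENNReal.ofReal (T * ρ T * (M + φ Eb))) Ts m +
              ENNReal.ofReal (Ts m * ρ (Ts m) * (M + φ Eb)) := rfl
          _ ≤ ENNReal.ofReal (1 + K * Ts m) *
              ENNReal.ofReal (Real.exp (K * s) * (c * (M + φ Eb)) * s) +
              ENNReal.ofReal (Ts m * c * (M + φ Eb)) :=
              add_le_add (mul_le_mul_right ih _) (ENNReal.ofReal_le_ofReal (hTρ m))
          _ = ENNReal.ofReal ((1 + K * Ts m) * (Real.exp (K * s) * (c * (M + φ Eb)) * s) +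
              Ts m * c * (M + φ Eb)) := by
              have hA : (0:ℝ) ≤ (1 + K * Ts m) * (Real.exp (K * s) * (c * (M + φ Eb)) * s) :=
                mul_nonneg haux (mul_nonneg (mul_nonneg (Real.exp_pos _).le hc') hsnn)
              have hB : (0:ℝ) ≤ Ts m * c * (M + φ Eb) :=
                mul_nonneg (mul_nonneg ht.le hc.le) hMφ
              rw [ENNReal.ofReal_add hA hB, ENNReal.ofReal_mul haux]
          _ ≤ ENNReal.ofReal (Real.exp (K * ∑ i ∈ Finset.range (m+1), Ts i) *
              (c * (M + φ Eb)) * ∑ i ∈ Finset.range (m+1), Ts i) := by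
              apply ENNReal.ofReal_le_ofReal
              rw [hs1]
              have he1 : 1 + K * Ts m ≤ Real.exp (K * Ts m) := by
                have := Real.add_one_le_exp (K * Ts m); linarith
              have he2 : Real.exp (K * (s + Ts m)) =
                  Real.exp (K * s) * Real.exp (K * Ts m) := by
                rw [← Real.exp_add]; ring_nf
              have he3 : (1:ℝ) ≤ Real.exp (K * (s + Ts m)) :=
                Real.one_le_exp (mul_nonneg hK.le (by linarith))
              have hek : 0 < Real.exp (K * s) := Real.exp_pos _
              have hA : (1 + K * Ts m) * Real.exp (K * s) ≤ Real.exp (K * (s + Ts m)) := by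
                rw [he2]
                nlinarith [mul_le_mul_of_nonneg_right he1 hek.le]
              have hB := mul_le_mul_of_nonneg_right hA (mul_nonneg hc' hsnn)
              have hC := mul_le_mul_of_nonneg_right he3 (mul_nonneg ht.le hc')
              nlinarith [hB, hC]
    refine le_trans (key k) (ENNReal.ofReal_le_ofReal ?_)
    set s : ℝ := ∑ i ∈ Finset.range k, Ts i with hs
    have hsnn : 0 ≤ s := hSnn k
    have hc' : 0 ≤ c * (M + φ Eb) := mul_nonneg hc.le hMφ
    have h1 : Real.exp (K * s) ≤ Real.exp (K * 𝒯) :=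
      Real.exp_le_exp.2 (mul_le_mul_of_nonneg_left hsum hK.le)
    have hm : Real.exp (K * s) * s ≤ Real.exp (K * 𝒯) * 𝒯 :=
      mul_le_mul h1 hsum hsnn (Real.exp_pos _).le
    have h3 : Real.exp (K * 𝒯) * (c * (M + φ Eb)) * 𝒯 = min η 1 * (M + φ Eb) := by
      rw [hc_def]; field_simp
    have h4 : min η 1 * (M + φ Eb) ≤ η * M + φ Eb := by
      have hm1 : min η 1 ≤ η := min_le_left _ _
      have hm2 : min η 1 ≤ 1 := min_le_right _ _
      calc min η 1 * (M + φ Eb) = min η 1 * M + min η 1 * φ Eb := by ring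
        _ ≤ η * M + 1 * φ Eb :=
            add_le_add (mul_le_mul_of_nonneg_right hm1 hM)
              (mul_le_mul_of_nonneg_right hm2 hφEb)
        _ = η * M + φ Eb := by ring
    calc Real.exp (K * s) * (c * (M + φ Eb)) * s
        = Real.exp (K * s) * s * (c * (M + φ Eb)) := by ring
      _ ≤ Real.exp (K * 𝒯) * 𝒯 * (c * (M + φ Eb)) :=
          mul_le_mul_of_nonneg_right hm hc'
      _ = Real.exp (K * 𝒯) * (c * (M + φ Eb)) * 𝒯 := by ring
      _ = min η 1 * (M + φ Eb) := h3
      _ ≤ η * M + φ Eb := h4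
end
end

section
/- The pair (F̄^{Euler}, F̄^e) is REPC: under Assumptions 1–3 and conditions (i) |f(0,U(0,e,T))| ≤ φ(|e|) for some φ ∈ K∞ (for |e| ≤ E, T small), and (ii) |f(x,U(x,e,T)) − f(y,U(y,e,T))| ≤ K|x−y| (semiglobally), the closed-loop Euler model F̄^{Euler}(x,e,T) := x + T f(x,U(x,e,T)) and the closed-loop exact model F̄^e(x,e,T) := F^e(x,U(x,e,T),T) satisfy: for each M, E ≥ 0 there exist K̂, T° > 0 and ρ ∈ K∞ with |F̄^e(x^e,e,T) − F̄^{Euler}(x^a,e,T)| ≤ (1+K̂T)|x^e − x^a| + Tρ(T)(|x^e| + φ(|e|)) for all |x^e|,|x^a| ≤ M, |e| ≤ E, T ∈ (0,T°). -/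
open scoped BigOperators NNReal

noncomputable section

open Set intervalIntegral MeasureTheory Topology Filter

lemma exp_sub_one_le {y : ℝ} (hy : 0 ≤ y) : Real.exp y - 1 ≤ y * Real.exp y := by
  have h1 := Real.add_one_le_exp (-y)
  have h2 := Real.exp_pos y
  have h3 : Real.exp (-y) * Real.exp y = 1 := by
    rw [← Real.exp_add]; simp
  nlinarith [mul_le_mul_of_nonneg_right h1 h2.le]

lemma euler_one_step {E : Type*} [NormedAddCommGroup E] [NormedSpace ℝ E] [CompleteSpace E]
    (v : E → E) (F : ℝ → E) (ξ : E) (M Cf L T : ℝ)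
    (hM : 0 ≤ M) (hCf : 0 < Cf) (hL : 0 < L)
    (hξ : ‖ξ‖ ≤ M)
    (hFc : ContinuousOn F (Set.Ici 0))
    (hFeq : ∀ t : ℝ, 0 ≤ t → F t = ξ + ∫ τ in (0:ℝ)..t, v (F τ))
    (hvb : ∀ x : E, ‖x‖ ≤ M + 1 → ‖v x‖ ≤ Cf)
    (hvl : ∀ x y : E, ‖x‖ ≤ M + 1 → ‖y‖ ≤ M + 1 → ‖v x - v y‖ ≤ L * ‖x - y‖)
    (hT0 : 0 < T) (hT1 : T ≤ 1) (hTCf : Cf * T ≤ 1/2) :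
    ‖F T - ξ - T • v ξ‖ ≤ L * Real.exp L * ‖v ξ‖ * T ^ 2 := by
  have hF0 : F 0 = ξ := by simpa using hFeq 0 le_rfl
  have hξ' : ‖ξ‖ ≤ M + 1 := by linarith
  have hFcT : ContinuousOn F (Icc 0 T) := hFc.mono (Icc_subset_Ici_self)
  -- continuity of v on the ball
  have hvc : ContinuousOn v (Metric.closedBall (0:E) (M+1)) := by
    have : LipschitzOnWith L.toNNReal v (Metric.closedBall (0:E) (M+1)) := by
      apply LipschitzOnWith.of_dist_le_mul
      intro x hx y hy
      rw [Metric.mem_closedBall, dist_zero_right] at hx hy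
      rw [dist_eq_norm, dist_eq_norm]
      simpa [Real.coe_toNNReal _ hL.le] using hvl x y hx hy
    exact this.continuousOn
  -- bootstrap: the flow stays within distance 1 of ξ
  have key : ∀ t ∈ Icc (0:ℝ) T, ‖F t - ξ‖ ≤ 1 := by
    by_contra hcon
    push_neg at hcon
    obtain ⟨t₀, ht₀, ht₀1⟩ := hcon
    set B : Set ℝ := Icc 0 T ∩ (fun t => ‖F t - ξ‖) ⁻¹' (Ici 1) with hB
    have hBne : B.Nonempty := ⟨t₀, ht₀, le_of_lt ht₀1⟩
    have hBclosed : IsClosed B := by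
      apply ContinuousOn.preimage_isClosed_of_isClosed
        ((hFcT.sub continuousOn_const).norm) isClosed_Icc isClosed_Ici
    have hBbdd : BddBelow B := ⟨0, fun t ht => ht.1.1⟩
    set t₁ := sInf B with ht₁def
    have ht₁B : t₁ ∈ B := hBclosed.csInf_mem hBne hBbdd
    have ht₁Icc : t₁ ∈ Icc (0:ℝ) T := ht₁B.1
    have ht₁pos : 0 < t₁ := by
      rcases eq_or_lt_of_le ht₁Icc.1 with h | h
      · exfalso
        have := ht₁B.2
        simp only [mem_preimage, mem_Ici] at this
        rw [← h, hF0] at this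
        simp at this
        linarith
      · exact h
    have hlt : ∀ s ∈ Ico (0:ℝ) t₁, ‖F s - ξ‖ ≤ 1 := by
      intro s hs
      by_contra hsc
      exact notMem_of_lt_csInf hs.2 hBbdd ⟨⟨hs.1, le_trans hs.2.le ht₁Icc.2⟩, le_of_lt (not_le.mp hsc)⟩
    have hend : ‖F t₁ - ξ‖ ≤ 1 := by
      have hcw : ContinuousWithinAt (fun t => ‖F t - ξ‖) (Ico 0 t₁) t₁ := by
        apply ((hFcT.sub continuousOn_const).norm t₁ ht₁Icc).mono
        intro y hy; exact ⟨hy.1, le_trans hy.2.le ht₁Icc.2⟩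
      have hne : (𝓝[Ico (0:ℝ) t₁] t₁).NeBot := by
        rw [nhdsWithin_Ico_eq_nhdsLT ht₁pos]
        infer_instance
      refine le_of_tendsto hcw ?_
      filter_upwards [self_mem_nhdsWithin] with y hy using hlt y hy
    have hle : ∀ s ∈ Icc (0:ℝ) t₁, ‖F s - ξ‖ ≤ 1 := by
      intro s hs
      rcases lt_or_eq_of_le hs.2 with h | h
      · exact hlt s ⟨hs.1, h⟩
      · rw [h]; exact hend
    have hrange : ∀ s ∈ Icc (0:ℝ) t₁, ‖F s‖ ≤ M + 1 := by
      intro s hs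
      have hid : ξ + (F s - ξ) = F s := by abel
      calc ‖F s‖ = ‖ξ + (F s - ξ)‖ := by rw [hid]
        _ ≤ ‖ξ‖ + ‖F s - ξ‖ := norm_add_le _ _
        _ ≤ M + 1 := add_le_add hξ (hle s hs)
    have hgc : ContinuousOn (fun τ => v (F τ)) (Icc 0 t₁) := by
      apply hvc.comp (hFcT.mono (Icc_subset_Icc le_rfl ht₁Icc.2))
      intro s hs
      rw [Metric.mem_closedBall, dist_zero_right]
      exact hrange s hs
    have hint : IntervalIntegrable (fun τ => v (F τ)) volume 0 t₁ := by
      apply ContinuousOn.intervalIntegrable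
      rwa [uIcc_of_le ht₁pos.le]
    have hval : F t₁ - ξ = ∫ τ in (0:ℝ)..t₁, v (F τ) := by
      rw [hFeq t₁ ht₁pos.le]; abel
    have hbound : ‖F t₁ - ξ‖ ≤ Cf * t₁ := by
      rw [hval]
      have := intervalIntegral.norm_integral_le_of_norm_le_const
        (C := Cf) (f := fun τ => v (F τ)) (a := (0:ℝ)) (b := t₁) ?_
      · rwa [sub_zero, abs_of_pos ht₁pos] at this
      · intro x hx
        rw [uIoc_of_le ht₁pos.le] at hx
        exact hvb _ (hrange x ⟨hx.1.le, hx.2⟩)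
    have h1 : (1:ℝ) ≤ ‖F t₁ - ξ‖ := ht₁B.2
    have : Cf * t₁ ≤ Cf * T := mul_le_mul_of_nonneg_left ht₁Icc.2 hCf.le
    linarith
  -- range bound on [0, T]
  have hrange : ∀ s ∈ Icc (0:ℝ) T, ‖F s‖ ≤ M + 1 := by
    intro s hs
    have hid : ξ + (F s - ξ) = F s := by abel
    calc ‖F s‖ = ‖ξ + (F s - ξ)‖ := by rw [hid]
      _ ≤ ‖ξ‖ + ‖F s - ξ‖ := norm_add_le _ _
      _ ≤ M + 1 := add_le_add hξ (key s hs)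
  have hgc : ContinuousOn (fun τ => v (F τ)) (Icc 0 T) := by
    apply hvc.comp hFcT
    intro s hs
    rw [Metric.mem_closedBall, dist_zero_right]
    exact hrange s hs
  set ε := ‖v ξ‖ with hε
  have hεnn : 0 ≤ ε := norm_nonneg _
  -- derivative of the flow
  have hderiv : ∀ x ∈ Ico (0:ℝ) T,
      HasDerivWithinAt (fun t => F t - ξ) (v (F x)) (Ici x) x := by
    intro x hx
    have hxIcc : x ∈ Icc (0:ℝ) T := ⟨hx.1, hx.2.le⟩
    have hint : IntervalIntegrable (fun τ => v (F τ)) volume 0 x := by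
      apply ContinuousOn.intervalIntegrable
      rw [uIcc_of_le hx.1]
      exact hgc.mono (Icc_subset_Icc le_rfl hx.2.le)
    have hmemIoi : Icc x T ∈ 𝓝[>] x :=
      mem_of_superset (Ioo_mem_nhdsGT_of_mem ⟨le_rfl, hx.2⟩) Ioo_subset_Icc_self
    have hmeas : StronglyMeasurableAtFilter (fun τ => v (F τ)) (𝓝[>] x) :=
      ⟨Icc x T, hmemIoi,
        ((hgc.mono (Icc_subset_Icc hx.1 le_rfl)).aestronglyMeasurable measurableSet_Icc)⟩
    have hcw : ContinuousWithinAt (fun τ => v (F τ)) (Ioi x) x := by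
      apply (hgc x hxIcc).mono_of_mem_nhdsWithin
      exact mem_of_superset hmemIoi (Icc_subset_Icc hx.1 le_rfl)
    have hI : HasDerivWithinAt (fun u => ∫ τ in (0:ℝ)..u, v (F τ)) (v (F x)) (Ici x) x :=
      intervalIntegral.integral_hasDerivWithinAt_right hint hmeas hcw
    have hI2 : HasDerivWithinAt (fun t => ξ + ∫ τ in (0:ℝ)..t, v (F τ)) (v (F x)) (Ici x) x :=
      hI.const_add ξ
    have hI3 : HasDerivWithinAt F (v (F x)) (Ici x) x := by
      apply hI2.congr
      · intro y hy
        exact hFeq y (le_trans hx.1 hy)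
      · exact hFeq x hx.1
    exact hI3.sub_const ξ
  -- Grönwall
  have hgron := norm_le_gronwallBound_of_norm_deriv_right_le
    (f := fun t => F t - ξ) (f' := fun t => v (F t)) (δ := 0) (K := L) (ε := ε)
    (a := 0) (b := T)
    (hFcT.sub continuousOn_const) hderiv (by simp [hF0])
    (fun x hx => by
      have h1 : ‖v (F x) - v ξ‖ ≤ L * ‖F x - ξ‖ :=
        hvl _ _ (hrange x ⟨hx.1, hx.2.le⟩) hξ'
      calc ‖v (F x)‖ ≤ ‖v (F x) - v ξ‖ + ‖v ξ‖ := by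
            simpa using norm_add_le (v (F x) - v ξ) (v ξ)
        _ ≤ L * ‖F x - ξ‖ + ε := by rw [hε]; linarith)
  have hgron2 : ∀ x ∈ Icc (0:ℝ) T, ‖F x - ξ‖ ≤ ε * Real.exp L * x := by
    intro x hx
    have := hgron x hx
    rw [gronwallBound_of_K_ne_0 hL.ne'] at this
    have hx1 : x ≤ 1 := le_trans hx.2 hT1
    have hLx : 0 ≤ L * x := mul_nonneg hL.le hx.1
    have h1 : Real.exp (L * x) - 1 ≤ (L * x) * Real.exp (L * x) := exp_sub_one_le hLx
    have h2 : Real.exp (L * x) ≤ Real.exp L := by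
      apply Real.exp_le_exp.mpr
      nlinarith
    have h3 : ε / L * (Real.exp (L * x) - 1) ≤ ε / L * ((L * x) * Real.exp L) := by
      apply mul_le_mul_of_nonneg_left _ (div_nonneg hεnn hL.le)
      calc Real.exp (L * x) - 1 ≤ (L * x) * Real.exp (L * x) := h1
        _ ≤ (L * x) * Real.exp L := mul_le_mul_of_nonneg_left h2 hLx
    have h4 : ε / L * ((L * x) * Real.exp L) = ε * Real.exp L * x := by
      field_simp
    rw [sub_zero] at this
    calc ‖F x - ξ‖ ≤ 0 * Real.exp (L * x) + ε / L * (Real.exp (L * x) - 1) := this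
      _ = ε / L * (Real.exp (L * x) - 1) := by ring
      _ ≤ ε * Real.exp L * x := by rw [← h4] at *; linarith
  -- final estimate
  have hintT : IntervalIntegrable (fun τ => v (F τ)) volume 0 T := by
    apply ContinuousOn.intervalIntegrable; rwa [uIcc_of_le hT0.le]
  have hsplit : F T - ξ - T • v ξ = ∫ τ in (0:ℝ)..T, (v (F τ) - v ξ) := by
    rw [intervalIntegral.integral_sub hintT intervalIntegrable_const,
      intervalIntegral.integral_const, hFeq T hT0.le, sub_zero]
    abel
  rw [hsplit]
  have := intervalIntegral.norm_integral_le_of_norm_le_const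
    (C := L * (ε * Real.exp L * T)) (f := fun τ => v (F τ) - v ξ) (a := (0:ℝ)) (b := T) ?_
  · rw [sub_zero, abs_of_pos hT0] at this
    calc ‖∫ τ in (0:ℝ)..T, (v (F τ) - v ξ)‖ ≤ L * (ε * Real.exp L * T) * T := this
      _ = L * Real.exp L * ε * T ^ 2 := by ring
  · intro x hx
    rw [uIoc_of_le hT0.le] at hx
    have hxIcc : x ∈ Icc (0:ℝ) T := ⟨hx.1.le, hx.2⟩
    calc ‖v (F x) - v ξ‖ ≤ L * ‖F x - ξ‖ := hvl _ _ (hrange x hxIcc) hξ'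
      _ ≤ L * (ε * Real.exp L * x) := mul_le_mul_of_nonneg_left (hgron2 x hxIcc) hL.le
      _ ≤ L * (ε * Real.exp L * T) := by
          apply mul_le_mul_of_nonneg_left _ hL.le
          apply mul_le_mul_of_nonneg_left hx.2 (by positivity)


theorem stmt12 {n m q : ℕ}
    (f : EuclideanSpace ℝ (Fin n) → EuclideanSpace ℝ (Fin m) → EuclideanSpace ℝ (Fin n))
    (U : EuclideanSpace ℝ (Fin n) → EuclideanSpace ℝ (Fin q) → ℝ → EuclideanSpace ℝ (Fin m))
    (Fe : EuclideanSpace ℝ (Fin n) → EuclideanSpace ℝ (Fin m) → ℝ → EuclideanSpace ℝ (Fin n))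
    -- Assumption 1: f locally Lipschitz in x uniformly in u
    (hLip : ∀ (X : Set (EuclideanSpace ℝ (Fin n))) (Uc : Set (EuclideanSpace ℝ (Fin m))),
      IsCompact X → IsCompact Uc → ∃ L : ℝ, 0 < L ∧
        ∀ x ∈ X, ∀ y ∈ X, ∀ u ∈ Uc, ‖f x u - f y u‖ ≤ L * ‖x - y‖)
    -- Assumption 2: f locally bounded
    (hBnd : ∀ M Cu : ℝ, 0 ≤ M → 0 ≤ Cu → ∃ Cf : ℝ, 0 < Cf ∧
      ∀ (x : EuclideanSpace ℝ (Fin n)) (u : EuclideanSpace ℝ (Fin m)),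
        ‖x‖ ≤ M → ‖u‖ ≤ Cu → ‖f x u‖ ≤ Cf)
    -- Assumption 3: U small-time locally uniformly bounded
    (hUb : ∀ M Eb : ℝ, 0 ≤ M → 0 ≤ Eb → ∃ Tu : ℝ, 0 < Tu ∧ ∃ Cu : ℝ, 0 < Cu ∧
      ∀ (x : EuclideanSpace ℝ (Fin n)) (e : EuclideanSpace ℝ (Fin q)) (T : ℝ),
        ‖x‖ ≤ M → ‖e‖ ≤ Eb → 0 < T → T < Tu → ‖U x e T‖ ≤ Cu)
    -- Fe is the exact flow of ẋ = f(x,u) with constant input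
    (hflow : ∀ (ξ : EuclideanSpace ℝ (Fin n)) (u : EuclideanSpace ℝ (Fin m)),
      ContinuousOn (fun t => Fe ξ u t) (Set.Ici 0) ∧
      ∀ t : ℝ, 0 ≤ t → Fe ξ u t = ξ + ∫ τ in (0 : ℝ)..t, f (Fe ξ u τ) u)
    (φ : ℝ → ℝ) (hφ : IsKInf φ)
    -- condition (i)
    (hcond1 : ∀ Eb : ℝ, 0 ≤ Eb → ∃ Ti : ℝ, 0 < Ti ∧
      ∀ (e : EuclideanSpace ℝ (Fin q)) (T : ℝ), ‖e‖ ≤ Eb → 0 < T → T < Ti →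
        ‖f 0 (U 0 e T)‖ ≤ φ ‖e‖)
    -- condition (ii)
    (hcond2 : ∀ M Eb : ℝ, 0 ≤ M → 0 ≤ Eb → ∃ K : ℝ, 0 < K ∧ ∃ Tii : ℝ, 0 < Tii ∧
      ∀ (xa xb : EuclideanSpace ℝ (Fin n)) (e : EuclideanSpace ℝ (Fin q)) (T : ℝ),
        ‖xa‖ ≤ M → ‖xb‖ ≤ M → ‖e‖ ≤ Eb → 0 < T → T < Tii →
        ‖f xa (U xa e T) - f xb (U xb e T)‖ ≤ K * ‖xa - xb‖) :
    ∀ M Eb : ℝ, 0 ≤ M → 0 ≤ Eb →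
      ∃ Khat : ℝ, 0 < Khat ∧ ∃ To : ℝ, 0 < To ∧ ∃ ρ : ℝ → ℝ, IsKInf ρ ∧
        ∀ (xe xa : EuclideanSpace ℝ (Fin n)) (e : EuclideanSpace ℝ (Fin q)) (T : ℝ),
          ‖xe‖ ≤ M → ‖xa‖ ≤ M → ‖e‖ ≤ Eb → 0 < T → T < To →
          ‖Fe xe (U xe e T) T - (xa + T • f xa (U xa e T))‖ ≤
            (1 + Khat * T) * ‖xe - xa‖ + T * ρ T * (‖xe‖ + φ ‖e‖) := by
  intro M Eb hM hEb
  obtain ⟨Tu, hTu, Cu, hCu, hUb'⟩ := hUb M Eb hM hEb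
  obtain ⟨Cf, hCf, hCfb⟩ := hBnd (M + 1) Cu (by linarith) hCu.le
  obtain ⟨L, hL, hLb⟩ := hLip (Metric.closedBall 0 (M + 1)) (Metric.closedBall 0 Cu)
    (isCompact_closedBall _ _) (isCompact_closedBall _ _)
  obtain ⟨Ti, hTi, hc1⟩ := hcond1 Eb hEb
  obtain ⟨K, hK, Tii, hTii, hc2⟩ := hcond2 M Eb hM hEb
  set C : ℝ := L * Real.exp L * max K 1 with hCdef
  have hC : 0 < C := by positivity
  refine ⟨K, hK, min (min Tu Ti) (min Tii (min (1 / (2 * Cf)) 1)), ?_, fun s => C * s, ?_, ?_⟩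
  · have : (0:ℝ) < 1 / (2 * Cf) := by positivity
    simp only [lt_min_iff]
    exact ⟨⟨hTu, hTi⟩, hTii, this, one_pos⟩
  · refine ⟨(continuous_const.mul continuous_id).continuousOn, ?_, mul_zero C, ?_⟩
    · intro x _ y _ hxy
      exact mul_lt_mul_of_pos_left hxy hC
    · intro c
      refine ⟨max ((c + 1) / C) 0, le_max_right _ _, ?_⟩
      have h1 : C * ((c + 1) / C) = c + 1 := by field_simp
      have h2 : C * ((c + 1) / C) ≤ C * max ((c + 1) / C) 0 :=
        mul_le_mul_of_nonneg_left (le_max_left _ _) hC.le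
      linarith
  · intro xe xa e T hxe hxa he hT0 hTlt
    simp only [lt_min_iff] at hTlt
    obtain ⟨⟨hTltu, hTlti⟩, hTltii, hTltCf, hTlt1⟩ := hTlt
    have hU1 : ‖U xe e T‖ ≤ Cu := hUb' xe e T hxe he hT0 hTltu
    -- Euler one-step error for the flow starting at xe
    have hone : ‖Fe xe (U xe e T) T - xe - T • f xe (U xe e T)‖ ≤
        L * Real.exp L * ‖f xe (U xe e T)‖ * T ^ 2 := by
      apply euler_one_step (fun x => f x (U xe e T)) (fun t => Fe xe (U xe e T) t) xe M Cf L T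
        hM hCf hL hxe (hflow xe (U xe e T)).1 (hflow xe (U xe e T)).2
      · intro x hx
        exact hCfb x _ hx hU1
      · intro x y hx hy
        apply hLb x (by simpa [Metric.mem_closedBall, dist_zero_right] using hx)
          y (by simpa [Metric.mem_closedBall, dist_zero_right] using hy)
          _ (by simpa [Metric.mem_closedBall, dist_zero_right] using hU1)
      · exact hT0
      · exact hTlt1.le
      · have : T * Cf < (1 / (2 * Cf)) * Cf := by
          exact mul_lt_mul_of_pos_right hTltCf hCf
        have h2 : (1 / (2 * Cf)) * Cf = 1 / 2 := by field_simp
        nlinarith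
    -- bound on ‖f xe u‖
    have hφe : 0 ≤ φ ‖e‖ := by
      obtain ⟨_, hmono, hzero, _⟩ := hφ
      rcases eq_or_lt_of_le (norm_nonneg e) with h | h
      · rw [← h, hzero]
      · have := hmono (Set.mem_Ici.mpr le_rfl) (Set.mem_Ici.mpr (norm_nonneg e)) h
        rw [hzero] at this
        exact this.le
    have hfb : ‖f xe (U xe e T)‖ ≤ K * ‖xe‖ + φ ‖e‖ := by
      have h1 : ‖f xe (U xe e T) - f 0 (U 0 e T)‖ ≤ K * ‖xe - 0‖ :=
        hc2 xe 0 e T hxe (by simp; exact hM) he hT0 hTltii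
      have h2 : ‖f 0 (U 0 e T)‖ ≤ φ ‖e‖ := hc1 e T he hT0 hTlti
      calc ‖f xe (U xe e T)‖
          ≤ ‖f xe (U xe e T) - f 0 (U 0 e T)‖ + ‖f 0 (U 0 e T)‖ := by
            simpa using norm_add_le (f xe (U xe e T) - f 0 (U 0 e T)) (f 0 (U 0 e T))
        _ ≤ K * ‖xe‖ + φ ‖e‖ := by rw [sub_zero] at h1; exact add_le_add h1 h2
    have hfb2 : ‖f xe (U xe e T)‖ ≤ max K 1 * (‖xe‖ + φ ‖e‖) := by
      have h1 : K * ‖xe‖ ≤ max K 1 * ‖xe‖ :=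
        mul_le_mul_of_nonneg_right (le_max_left _ _) (norm_nonneg _)
      have h2 : φ ‖e‖ ≤ max K 1 * φ ‖e‖ := by
        nlinarith [le_max_right K 1, hφe]
      calc ‖f xe (U xe e T)‖ ≤ K * ‖xe‖ + φ ‖e‖ := hfb
        _ ≤ max K 1 * ‖xe‖ + max K 1 * φ ‖e‖ := add_le_add h1 h2
        _ = max K 1 * (‖xe‖ + φ ‖e‖) := by ring
    -- Lipschitz difference of vector fields
    have hdiff : ‖f xe (U xe e T) - f xa (U xa e T)‖ ≤ K * ‖xe - xa‖ :=
      hc2 xe xa e T hxe hxa he hT0 hTltii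
    -- assemble
    have hsplit : Fe xe (U xe e T) T - (xa + T • f xa (U xa e T)) =
        (Fe xe (U xe e T) T - xe - T • f xe (U xe e T)) + (xe - xa) +
          T • (f xe (U xe e T) - f xa (U xa e T)) := by
      rw [smul_sub]; abel
    rw [hsplit]
    have hn3 : ‖T • (f xe (U xe e T) - f xa (U xa e T))‖ ≤ T * (K * ‖xe - xa‖) := by
      rw [norm_smul, Real.norm_eq_abs, abs_of_pos hT0]
      exact mul_le_mul_of_nonneg_left hdiff hT0.le
    have hn1 : ‖Fe xe (U xe e T) T - xe - T • f xe (U xe e T)‖ ≤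
        T * (C * T) * (‖xe‖ + φ ‖e‖) := by
      calc ‖Fe xe (U xe e T) T - xe - T • f xe (U xe e T)‖
          ≤ L * Real.exp L * ‖f xe (U xe e T)‖ * T ^ 2 := hone
        _ ≤ L * Real.exp L * (max K 1 * (‖xe‖ + φ ‖e‖)) * T ^ 2 := by
            apply mul_le_mul_of_nonneg_right _ (by positivity)
            apply mul_le_mul_of_nonneg_left hfb2 (by positivity)
        _ = T * (C * T) * (‖xe‖ + φ ‖e‖) := by rw [hCdef]; ring
    calc ‖Fe xe (U xe e T) T - xe - T • f xe (U xe e T) + (xe - xa) +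
          T • (f xe (U xe e T) - f xa (U xa e T))‖
        ≤ ‖Fe xe (U xe e T) T - xe - T • f xe (U xe e T) + (xe - xa)‖ +
          ‖T • (f xe (U xe e T) - f xa (U xa e T))‖ := norm_add_le _ _
      _ ≤ ‖Fe xe (U xe e T) T - xe - T • f xe (U xe e T)‖ + ‖xe - xa‖ +
          ‖T • (f xe (U xe e T) - f xa (U xa e T))‖ := by
            have := norm_add_le (Fe xe (U xe e T) T - xe - T • f xe (U xe e T)) (xe - xa)
            linarith
      _ ≤ T * (C * T) * (‖xe‖ + φ ‖e‖) + ‖xe - xa‖ + T * (K * ‖xe - xa‖) := by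
            have := norm_nonneg (xe - xa)
            linarith
      _ = (1 + K * T) * ‖xe - xa‖ + T * (C * T) * (‖xe‖ + φ ‖e‖) := by ring
end
end

section
/- Lyapunov ISS decrease for the perturbed Euler–Heun closed loop: Let V(x) = x², f_d(x) = −x³ − 2x, F̄^{Heun}(x,T) := x + (T/2)(f_d(x) + f_d(x + T f_d(x))), U(x,e,T) := (F̄^{Heun}(x+e,T) − x − e)/T − (x+e)³, and F̄(x,e,T) := x + T(x³ + U(x,e,T)). Then for every M, E ≥ 0 there exists T̃ > 0 (e.g. T̃ = min{1/(C(1 + ∑_{i=1}^{8} M^{2i})), 1} with C = 670) such that V(F̄(x,e,T)) − V(x) ≤ −T·x²/2 whenever |e| ≤ min{0.01|x|, E}, |x| ≤ M and T ∈ (0, T̃). -/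
open scoped BigOperators NNReal

noncomputable section

/-- Desired closed-loop continuous-time dynamics. -/
def fd (x : ℝ) : ℝ := -x ^ 3 - 2 * x

/-- Heun (second-order Runge–Kutta) model of `ẋ = f_d(x)`. -/
def heun (x T : ℝ) : ℝ := x + T / 2 * (fd x + fd (x + T * fd x))

/-- Control law with additive state-measurement error. -/
def Ue (x e T : ℝ) : ℝ := (heun (x + e) T - x - e) / T - (x + e) ^ 3

/-- Perturbed closed-loop Euler model. -/
def Fbar (x e T : ℝ) : ℝ := x + T * (x ^ 3 + Ue x e T)

/-- Lyapunov function. -/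
def V (x : ℝ) : ℝ := x ^ 2

lemma Fbar_eq (x e T : ℝ) (hT : T ≠ 0) :
    Fbar x e T = x + T * (x ^ 3 - (x + e) ^ 3 +
      (fd (x + e) + fd ((x + e) + T * fd (x + e))) / 2) := by
  simp only [Fbar, Ue, heun]
  field_simp
  ring

lemma aux_cube3 (a M : ℝ) (ha : 0 ≤ a) (hM : 0 ≤ M) (haM : a ≤ M) :
    a ^ 3 ≤ M ^ 2 * a := by
  nlinarith [mul_le_mul_of_nonneg_right (mul_le_mul haM haM ha hM) ha]

lemma aux_cube (u a : ℝ) (hu : 0 ≤ u) (h : u ≤ 1.01 * a) :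
    u ^ 3 ≤ 1.030301 * a ^ 3 := by
  nlinarith [pow_le_pow_left₀ hu h 3]

lemma aux_quadA (S u a : ℝ) (ha : 0 ≤ a) (hu : 0 ≤ u) (huc : u ≤ 1.01 * a)
    (hS : S ≤ a ^ 2 + a * u + u ^ 2) : S ≤ 3.04 * a ^ 2 := by
  nlinarith [mul_le_mul huc huc hu (by linarith), mul_le_mul_of_nonneg_left huc ha]

lemma aux_quadB (S u a : ℝ) (ha : 0 ≤ a) (hu : 0 ≤ u) (huc : u ≤ 1.01 * a)
    (hS : S ≤ u ^ 2 + u * a + a ^ 2 + 2) : S ≤ 3.04 * a ^ 2 + 2 := by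
  nlinarith [mul_le_mul huc huc hu (by linarith), mul_le_mul_of_nonneg_right huc ha]

lemma aux_quadC (S u a : ℝ) (ha : 0 ≤ a) (hu : 0 ≤ u) (huc : u ≤ 1.1 * a)
    (hS : S ≤ u ^ 2 + u * a + a ^ 2 + 2) : S ≤ 3.31 * a ^ 2 + 2 := by
  nlinarith [mul_le_mul huc huc hu (by linarith), mul_le_mul_of_nonneg_right huc ha]

lemma aux_w2 (w T a M : ℝ) (hT : 0 < T) (ha : 0 ≤ a)
    (hT2 : T ≤ 3 / (1.22 * M ^ 2 + 3) ^ 2)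
    (hw : |w| ≤ T * (a * (1.22 * M ^ 2 + 3))) : w ^ 2 ≤ T * (3 * a ^ 2) := by
  have h1 : w ^ 2 ≤ (T * (a * (1.22 * M ^ 2 + 3))) ^ 2 := by
    rw [← sq_abs w]
    exact pow_le_pow_left₀ (abs_nonneg w) hw 2
  have h2 : T * (1.22 * M ^ 2 + 3) ^ 2 ≤ 3 := by
    rw [le_div_iff₀ (by positivity)] at hT2; linarith
  have h4 := mul_le_mul_of_nonneg_right h2 (mul_nonneg hT.le (sq_nonneg a))
  nlinarith [h1, h4]

set_option maxHeartbeats 1000000 in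
theorem stmt16 :
    ∀ M E : ℝ, 0 ≤ M → 0 ≤ E → ∃ Tt : ℝ, 0 < Tt ∧
      ∀ x e T : ℝ, |e| ≤ min (0.01 * |x|) E → |x| ≤ M → 0 < T → T < Tt →
        V (Fbar x e T) - V x ≤ -(T * x ^ 2 / 2) := by
  intro M E hM hE
  have hc1 : (0:ℝ) < 1.031 * M ^ 2 + 2.02 := by positivity
  have hc2 : (0:ℝ) < 1.22 * M ^ 2 + 3 := by positivity
  refine ⟨min (0.09 / (1.031 * M ^ 2 + 2.02)) (3 / (1.22 * M ^ 2 + 3) ^ 2),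
    by positivity, ?_⟩
  intro x e T he hx hT hTt
  have hT1 : T ≤ 0.09 / (1.031 * M ^ 2 + 2.02) :=
    le_of_lt (lt_of_lt_of_le hTt (min_le_left _ _))
  have hT2 : T ≤ 3 / (1.22 * M ^ 2 + 3) ^ 2 :=
    le_of_lt (lt_of_lt_of_le hTt (min_le_right _ _))
  have hF := Fbar_eq x e T hT.ne'
  set a := |x| with ha_def
  set b := |e| with hb_def
  have ha0 : (0:ℝ) ≤ a := abs_nonneg x
  have hb0 : (0:ℝ) ≤ b := abs_nonneg e
  have hba : b ≤ 0.01 * a := (le_min_iff.mp he).1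
  have haM : a ≤ M := hx
  set y := x + e with hy_def
  set z := y + T * fd y with hz_def
  set w := T * (x ^ 3 - y ^ 3 + (fd y + fd z) / 2) with hw_def
  clear_value w z y b a
  clear he hTt
  have ha3 : a ^ 3 ≤ M ^ 2 * a := aux_cube3 a M ha0 hM haM
  have hM2a : (0:ℝ) ≤ M ^ 2 * a := by positivity
  have hay : |y| ≤ 1.01 * a := by
    rw [hy_def]
    calc |x + e| ≤ |x| + |e| := abs_add_le x e
    _ ≤ 1.01 * a := by rw [← ha_def, ← hb_def]; linarith
  have hfy : |fd y| ≤ a * (1.031 * M ^ 2 + 2.02) := by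
    have h1 : |fd y| ≤ |y| ^ 3 + 2 * |y| := by
      simp only [fd]
      calc |(-y ^ 3 - 2 * y)| ≤ |(-y ^ 3)| + |2 * y| := abs_sub _ _
      _ = |y| ^ 3 + 2 * |y| := by rw [abs_neg, abs_pow, abs_mul]; norm_num
    have hu3 : |y| ^ 3 ≤ 1.030301 * a ^ 3 := aux_cube _ a (abs_nonneg y) hay
    linarith [ha3, hM2a]
  have hTfy : T * |fd y| ≤ 0.09 * a := by
    calc T * |fd y| ≤ T * (a * (1.031 * M ^ 2 + 2.02)) :=
          mul_le_mul_of_nonneg_left hfy hT.le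
    _ ≤ (0.09 / (1.031 * M ^ 2 + 2.02)) * (a * (1.031 * M ^ 2 + 2.02)) :=
          mul_le_mul_of_nonneg_right hT1 (by positivity)
    _ = 0.09 * a := by field_simp
  have hzx : |z - x| ≤ 0.1 * a := by
    have hzz : z - x = e + T * fd y := by rw [hz_def, hy_def]; ring
    calc |z - x| = |e + T * fd y| := by rw [hzz]
    _ ≤ |e| + |T * fd y| := abs_add_le _ _
    _ = b + T * |fd y| := by rw [abs_mul, abs_of_pos hT, ← hb_def]
    _ ≤ 0.01 * a + 0.09 * a := add_le_add hba hTfy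
    _ = 0.1 * a := by ring
  have haz : |z| ≤ 1.1 * a := by
    calc |z| = |x + (z - x)| := by ring_nf
    _ ≤ |x| + |z - x| := abs_add_le _ _
    _ ≤ a + 0.1 * a := by rw [← ha_def]; exact add_le_add le_rfl hzx
    _ = 1.1 * a := by ring
  -- three difference bounds
  have hr1 : |x ^ 3 - y ^ 3| ≤ 0.01 * a * (3.04 * a ^ 2) := by
    have heq : x ^ 3 - y ^ 3 = -(e * (x ^ 2 + x * y + y ^ 2)) := by rw [hy_def]; ring
    rw [heq, abs_neg, abs_mul]
    have t1 : |x ^ 2 + x * y + y ^ 2| ≤ |x| ^ 2 + |x| * |y| + |y| ^ 2 := by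
      calc |x ^ 2 + x * y + y ^ 2| ≤ |x ^ 2 + x * y| + |y ^ 2| := abs_add_le _ _
      _ ≤ |x ^ 2| + |x * y| + |y ^ 2| := by linarith [abs_add_le (x ^ 2) (x * y)]
      _ = |x| ^ 2 + |x| * |y| + |y| ^ 2 := by rw [abs_pow, abs_pow, abs_mul]
    rw [← ha_def] at t1
    have h2 : |x ^ 2 + x * y + y ^ 2| ≤ 3.04 * a ^ 2 :=
      aux_quadA _ |y| a ha0 (abs_nonneg y) hay t1
    calc |e| * |x ^ 2 + x * y + y ^ 2| ≤ (0.01 * a) * (3.04 * a ^ 2) := by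
          rw [← hb_def]
          exact mul_le_mul hba h2 (abs_nonneg _) (by linarith)
    _ = 0.01 * a * (3.04 * a ^ 2) := by ring
  have hd1 : |fd y - fd x| ≤ 0.01 * a * (3.04 * a ^ 2 + 2) := by
    have heq : fd y - fd x = -(e * (y ^ 2 + y * x + x ^ 2 + 2)) := by
      simp only [fd]; rw [hy_def]; ring
    rw [heq, abs_neg, abs_mul]
    have t1 : |y ^ 2 + y * x + x ^ 2 + 2| ≤ |y| ^ 2 + |y| * |x| + |x| ^ 2 + 2 := by
      calc |y ^ 2 + y * x + x ^ 2 + 2| ≤ |y ^ 2 + y * x + x ^ 2| + |(2:ℝ)| := abs_add_le _ _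
      _ ≤ |y ^ 2| + |y * x| + |x ^ 2| + 2 := by
          have h3 := abs_add_le (y ^ 2 + y * x) (x ^ 2)
          have h4 := abs_add_le (y ^ 2) (y * x)
          rw [abs_two]; linarith
      _ = |y| ^ 2 + |y| * |x| + |x| ^ 2 + 2 := by rw [abs_pow, abs_pow, abs_mul]
    rw [← ha_def] at t1
    have h2 : |y ^ 2 + y * x + x ^ 2 + 2| ≤ 3.04 * a ^ 2 + 2 :=
      aux_quadB _ |y| a ha0 (abs_nonneg y) hay t1
    calc |e| * |y ^ 2 + y * x + x ^ 2 + 2| ≤ (0.01 * a) * (3.04 * a ^ 2 + 2) := by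
          rw [← hb_def]
          exact mul_le_mul hba h2 (abs_nonneg _) (by linarith)
    _ = 0.01 * a * (3.04 * a ^ 2 + 2) := by ring
  have hd2 : |fd z - fd x| ≤ 0.1 * a * (3.31 * a ^ 2 + 2) := by
    have heq : fd z - fd x = -((z - x) * (z ^ 2 + z * x + x ^ 2 + 2)) := by
      simp only [fd]; ring
    rw [heq, abs_neg, abs_mul]
    have t1 : |z ^ 2 + z * x + x ^ 2 + 2| ≤ |z| ^ 2 + |z| * |x| + |x| ^ 2 + 2 := by
      calc |z ^ 2 + z * x + x ^ 2 + 2| ≤ |z ^ 2 + z * x + x ^ 2| + |(2:ℝ)| := abs_add_le _ _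
      _ ≤ |z ^ 2| + |z * x| + |x ^ 2| + 2 := by
          have h3 := abs_add_le (z ^ 2 + z * x) (x ^ 2)
          have h4 := abs_add_le (z ^ 2) (z * x)
          rw [abs_two]; linarith
      _ = |z| ^ 2 + |z| * |x| + |x| ^ 2 + 2 := by rw [abs_pow, abs_pow, abs_mul]
    rw [← ha_def] at t1
    have h2 : |z ^ 2 + z * x + x ^ 2 + 2| ≤ 3.31 * a ^ 2 + 2 :=
      aux_quadC _ |z| a ha0 (abs_nonneg z) haz t1
    exact mul_le_mul hzx h2 (abs_nonneg _) (by linarith)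
  -- the remainder r
  set r := (x ^ 3 - y ^ 3) + ((fd y - fd x) + (fd z - fd x)) / 2 with hr_def
  clear_value r
  have hr : |r| ≤ 0.22 * a ^ 3 + 0.11 * a := by
    have hsum : |r| ≤ |x ^ 3 - y ^ 3| + (|fd y - fd x| + |fd z - fd x|) / 2 := by
      rw [hr_def]
      calc |x ^ 3 - y ^ 3 + ((fd y - fd x) + (fd z - fd x)) / 2|
          ≤ |x ^ 3 - y ^ 3| + |((fd y - fd x) + (fd z - fd x)) / 2| := abs_add_le _ _
      _ ≤ |x ^ 3 - y ^ 3| + (|fd y - fd x| + |fd z - fd x|) / 2 := by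
          rw [abs_div, abs_two]
          linarith [abs_add_le (fd y - fd x) (fd z - fd x)]
    have h3 : (0:ℝ) ≤ a ^ 3 := pow_nonneg ha0 3
    linarith [hsum, hr1, hd1, hd2]
  have hwr : w = T * (fd x + r) := by
    rw [hw_def, hr_def]; simp only [fd]; ring
  have hfx : |fd x| ≤ a ^ 3 + 2 * a := by
    simp only [fd]
    calc |(-x ^ 3 - 2 * x)| ≤ |(-x ^ 3)| + |2 * x| := abs_sub _ _
    _ = a ^ 3 + 2 * a := by
        rw [abs_neg, abs_pow, abs_mul, ← ha_def]; norm_num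
  have hw_abs : |w| ≤ T * (a * (1.22 * M ^ 2 + 3)) := by
    rw [hwr, abs_mul, abs_of_pos hT]
    apply mul_le_mul_of_nonneg_left _ hT.le
    calc |fd x + r| ≤ |fd x| + |r| := abs_add_le _ _
    _ ≤ (a ^ 3 + 2 * a) + (0.22 * a ^ 3 + 0.11 * a) := add_le_add hfx hr
    _ ≤ a * (1.22 * M ^ 2 + 3) := by linarith [ha3, ha0]
  have hw2 : w ^ 2 ≤ T * (3 * a ^ 2) := aux_w2 w T a M hT ha0 hT2 hw_abs
  have ha2 : a ^ 2 = x ^ 2 := by rw [ha_def]; exact sq_abs x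
  have ha4 : a ^ 4 = x ^ 4 := by
    have h5 : a ^ 4 = (a ^ 2) ^ 2 := by ring
    rw [h5, ha2]; ring
  have hxr : x * r ≤ 0.22 * x ^ 4 + 0.11 * x ^ 2 := by
    have h6 : x * r ≤ a * (0.22 * a ^ 3 + 0.11 * a) := by
      calc x * r ≤ |x * r| := le_abs_self _
      _ = a * |r| := by rw [abs_mul, ← ha_def]
      _ ≤ a * (0.22 * a ^ 3 + 0.11 * a) := mul_le_mul_of_nonneg_left hr ha0
    rw [show a * (0.22 * a ^ 3 + 0.11 * a) = 0.22 * a ^ 4 + 0.11 * a ^ 2 from by ring,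
      ha4, ha2] at h6
    exact h6
  -- final assembly
  have hVeq : V (Fbar x e T) - V x = 2 * x * w + w ^ 2 := by
    rw [hF]; simp only [V]; ring
  rw [hVeq]
  have h2xw : 2 * x * w = T * (-2 * x ^ 4 - 4 * x ^ 2) + 2 * T * (x * r) := by
    rw [hwr]; simp only [fd]; ring
  have hxr' : 2 * T * (x * r) ≤ T * (0.44 * x ^ 4 + 0.22 * x ^ 2) := by
    have h6 := mul_le_mul_of_nonneg_left hxr hT.le
    linarith
  rw [h2xw]
  have hw2' : w ^ 2 ≤ T * (3 * x ^ 2) := by rw [← ha2]; exact hw2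
  have htx2 : (0:ℝ) ≤ T * x ^ 2 := mul_nonneg hT.le (sq_nonneg x)
  have htx4 : (0:ℝ) ≤ T * x ^ 4 := by positivity
  linarith [hxr', hw2', htx2, htx4]
end
end
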